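/- Assume the sparsity ansatz. For B > 0 let L̂_B be a minimizer of CE(L) over {L ∈ ℝ^{V×m} : ‖L‖_* ≤ B}, let L^mm be a minimizer of the NTP-SVM program, and for B > ‖L^in‖_* set R = R(B) := (‖L̂_B‖_* − ‖L^in‖_*)/‖L^mm‖_*. Then: (a) the matrix L_R := L^in + R·L^mm satisfies ‖L_R‖_* ≤ B and CE(L_R) ≤ H + V·e^{2‖L^in‖₂}·e^{−R}, where ‖·‖₂ is the spectral norm; (b) lim_{B→∞} R(B) = +∞ and lim_{B→∞} R(B)/‖L̂_B‖_* = 1/‖L^mm‖_*; (c) lim_{B→∞} CE(L̂_B) = H. -/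

import Mathlib

open Filter Topology Matrix

noncomputable section

/-- Nuclear norm: sum of the singular values of `A`. -/
def nuclearNorm {a b : ℕ} (A : Matrix (Fin a) (Fin b) ℝ) : ℝ :=
  ∑ i, Real.sqrt ((show (Aᵀ * A).IsHermitian by simpa using Matrix.isHermitian_conjTranspose_mul_self A).eigenvalues i)

/-- Spectral norm: largest singular value of `A`. -/
def specNorm {a b : ℕ} (A : Matrix (Fin a) (Fin b) ℝ) : ℝ :=
  ⨆ i, Real.sqrt ((show (Aᵀ * A).IsHermitian by simpa using Matrix.isHermitian_conjTranspose_mul_self A).eigenvalues i)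

/-- The NTP cross-entropy loss. -/
def CEloss {V m : ℕ} (piv : Fin m → ℝ) (p : Fin m → Fin V → ℝ)
    (L : Matrix (Fin V) (Fin m) ℝ) : ℝ :=
  - ∑ j, piv j * ∑ z ∈ Finset.univ.filter (fun z => 0 < p j z),
      p j z * Real.log (Real.exp (L z j) / ∑ v, Real.exp (L v j))

/-- The empirical entropy. -/
def entropyH {V m : ℕ} (piv : Fin m → ℝ) (p : Fin m → Fin V → ℝ) : ℝ :=
  - ∑ j, piv j * ∑ z ∈ Finset.univ.filter (fun z => 0 < p j z),
      p j z * Real.log (p j z)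

/-- Feasibility for the NTP-SVM program (support sets `S_j = {z | 0 < p j z}`). -/
def svmFeasibleP {V m : ℕ} (p : Fin m → Fin V → ℝ) (L : Matrix (Fin V) (Fin m) ℝ) : Prop :=
  (∀ j z z', 0 < p j z → 0 < p j z' → L z j = L z' j) ∧
  (∀ j z v, 0 < p j z → ¬ 0 < p j v → 1 ≤ L z j - L v j)

/-- The subspace `F`: span of the matrices `(e_z − e_{z'}) ẽ_jᵀ` over `j` and `z, z' ∈ S_j`. -/
def Fsub {V m : ℕ} (p : Fin m → Fin V → ℝ) : Submodule ℝ (Matrix (Fin V) (Fin m) ℝ) :=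
  Submodule.span ℝ {M | ∃ j z z', 0 < p j z ∧ 0 < p j z' ∧
    M = Matrix.single z j 1 - Matrix.single z' j 1}


namespace NucAux

variable {a b : ℕ}

def lam (A : Matrix (Fin a) (Fin b) ℝ) : Fin b → ℝ :=
  ((show (Aᵀ * A).IsHermitian by simpa using Matrix.isHermitian_conjTranspose_mul_self A)).eigenvalues

def wv (A : Matrix (Fin a) (Fin b) ℝ) (i : Fin b) : Fin b → ℝ :=
  (((show (Aᵀ * A).IsHermitian by simpa using Matrix.isHermitian_conjTranspose_mul_self A)).eigenvectorBasis i : EuclideanSpace ℝ (Fin b))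

def sig (A : Matrix (Fin a) (Fin b) ℝ) (i : Fin b) : ℝ := Real.sqrt (lam A i)

def uv (A : Matrix (Fin a) (Fin b) ℝ) (i : Fin b) : Fin a → ℝ :=
  (sig A i)⁻¹ • (A *ᵥ wv A i)

lemma lam_nonneg (A : Matrix (Fin a) (Fin b) ℝ) (i : Fin b) : 0 ≤ lam A i :=
  Matrix.eigenvalues_conjTranspose_mul_self_nonneg A i

lemma sig_nonneg (A : Matrix (Fin a) (Fin b) ℝ) (i : Fin b) : 0 ≤ sig A i := Real.sqrt_nonneg _

lemma eig_eq (A : Matrix (Fin a) (Fin b) ℝ) (i : Fin b) :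
    (Aᴴ * A) *ᵥ wv A i = lam A i • wv A i :=
  ((show (Aᵀ * A).IsHermitian by simpa using Matrix.isHermitian_conjTranspose_mul_self A)).mulVec_eigenvectorBasis i

lemma wv_dot (A : Matrix (Fin a) (Fin b) ℝ) (i j : Fin b) :
    wv A i ⬝ᵥ wv A j = if i = j then 1 else 0 := by
  have h := ((show (Aᵀ * A).IsHermitian by simpa using Matrix.isHermitian_conjTranspose_mul_self A)).eigenvectorBasis.orthonormal
  rw [orthonormal_iff_ite] at h
  have := h i j
  simpa [PiLp.inner_apply, RCLike.inner_apply, dotProduct, wv, mul_comm] using this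

lemma mulVec_dot (A : Matrix (Fin a) (Fin b) ℝ) (x y : Fin b → ℝ) :
    (A *ᵥ x) ⬝ᵥ (A *ᵥ y) = x ⬝ᵥ ((Aᴴ * A) *ᵥ y) := by
  rw [← Matrix.mulVec_mulVec, Matrix.dotProduct_mulVec x, Matrix.vecMul_conjTranspose]
  simp

lemma Awv_dot (A : Matrix (Fin a) (Fin b) ℝ) (i j : Fin b) :
    (A *ᵥ wv A i) ⬝ᵥ (A *ᵥ wv A j) = if i = j then lam A i else 0 := by
  rw [mulVec_dot, eig_eq, dotProduct_smul, smul_eq_mul, wv_dot]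
  by_cases h : i = j <;> simp [h]


lemma dot_self_nonneg {n : ℕ} (x : Fin n → ℝ) : 0 ≤ x ⬝ᵥ x :=
  Finset.sum_nonneg fun i _ => mul_self_nonneg _

lemma dot_self_eq_zero {n : ℕ} {x : Fin n → ℝ} (h : x ⬝ᵥ x = 0) : x = 0 := by
  exact dotProduct_self_eq_zero.mp h

/-- Bessel-type inequality for a pairwise-orthogonal family with norms ≤ 1. -/
lemma dot_sum {n r : ℕ} (x : Fin n → ℝ) (f : Fin r → Fin n → ℝ) :
    x ⬝ᵥ (∑ i, f i) = ∑ i, x ⬝ᵥ f i := by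
  simp only [dotProduct, Finset.sum_apply, Finset.mul_sum]
  exact Finset.sum_comm

lemma sum_dot {n r : ℕ} (x : Fin n → ℝ) (f : Fin r → Fin n → ℝ) :
    (∑ i, f i) ⬝ᵥ x = ∑ i, f i ⬝ᵥ x := by
  simp only [dotProduct, Finset.sum_apply, Finset.sum_mul]
  exact Finset.sum_comm

lemma bessel {n r : ℕ} (v : Fin r → (Fin n → ℝ))
    (h0 : ∀ i j, i ≠ j → v i ⬝ᵥ v j = 0) (h1 : ∀ i, v i ⬝ᵥ v i ≤ 1) (x : Fin n → ℝ) :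
    ∑ i, (v i ⬝ᵥ x) ^ 2 ≤ x ⬝ᵥ x := by
  set c : Fin r → ℝ := fun i => v i ⬝ᵥ x with hc
  have key : 0 ≤ (x - ∑ i, c i • v i) ⬝ᵥ (x - ∑ i, c i • v i) := dot_self_nonneg _
  have expand : (x - ∑ i, c i • v i) ⬝ᵥ (x - ∑ i, c i • v i)
      = x ⬝ᵥ x - 2 * ∑ i, c i ^ 2 + ∑ i, c i ^ 2 * (v i ⬝ᵥ v i) := by
    rw [sub_dotProduct, dotProduct_sub, dotProduct_sub]
    rw [dot_sum, sum_dot]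
    have e1 : ∀ i, x ⬝ᵥ (c i • v i) = c i ^ 2 := by
      intro i
      rw [dotProduct_smul, smul_eq_mul, dotProduct_comm]
      simp only [hc]; ring
    have e2 : ∀ i, (c i • v i) ⬝ᵥ x = c i ^ 2 := by
      intro i
      rw [smul_dotProduct, smul_eq_mul]; simp only [hc]; ring
    have e3 : ∀ i, (c i • v i) ⬝ᵥ (∑ j, c j • v j) = c i ^ 2 * (v i ⬝ᵥ v i) := by
      intro i
      rw [dot_sum]
      rw [Finset.sum_eq_single i]
      · rw [smul_dotProduct, dotProduct_smul]; simp [smul_eq_mul]; ring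
      · intro j _ hj
        rw [smul_dotProduct, dotProduct_smul, h0 i j (Ne.symm hj)]
        simp
      · simp
    rw [Finset.sum_congr rfl (fun i _ => e1 i), Finset.sum_congr rfl (fun i _ => e2 i),
      sum_dot, Finset.sum_congr rfl (fun i _ => e3 i)]
    ring
  rw [expand] at key
  have h2 : ∑ i, c i ^ 2 * (v i ⬝ᵥ v i) ≤ ∑ i, c i ^ 2 := by
    apply Finset.sum_le_sum
    intro i _
    have := h1 i
    nlinarith [sq_nonneg (c i)]
  linarith

end NucAux

namespace NucAux
variable {a b : ℕ}

/-- Expansion of a vector in the eigenbasis of `Aᴴ * A`. -/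
lemma vec_expand (A : Matrix (Fin a) (Fin b) ℝ) (x : Fin b → ℝ) :
    x = ∑ i, (wv A i ⬝ᵥ x) • wv A i := by
  have h := ((show (Aᵀ * A).IsHermitian by simpa using Matrix.isHermitian_conjTranspose_mul_self A)).eigenvectorBasis.sum_repr'
    (WithLp.toLp 2 x : EuclideanSpace ℝ (Fin b))
  have : ∀ i, (inner ℝ (((show (Aᵀ * A).IsHermitian by simpa using Matrix.isHermitian_conjTranspose_mul_self A)).eigenvectorBasis i)
      (WithLp.toLp 2 x : EuclideanSpace ℝ (Fin b)) : ℝ) = wv A i ⬝ᵥ x := by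
    intro i
    simp [PiLp.inner_apply, RCLike.inner_apply, dotProduct, wv, mul_comm]
  rw [Finset.sum_congr rfl (fun i _ => by rw [this i])] at h
  simpa [WithLp.ofLp_sum, WithLp.ofLp_smul, wv] using (congrArg WithLp.ofLp h).symm

lemma mulVec_expand (A : Matrix (Fin a) (Fin b) ℝ) (x : Fin b → ℝ) :
    A *ᵥ x = ∑ i, (wv A i ⬝ᵥ x) • (A *ᵥ wv A i) := by
  conv_lhs => rw [vec_expand A x]
  rw [show A *ᵥ (∑ i, (wv A i ⬝ᵥ x) • wv A i) =
      A.mulVecLin (∑ i, (wv A i ⬝ᵥ x) • wv A i) from rfl, map_sum]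
  exact Finset.sum_congr rfl fun i _ => by rw [LinearMap.map_smul]; rfl

lemma Awv_eq (A : Matrix (Fin a) (Fin b) ℝ) (i : Fin b) :
    A *ᵥ wv A i = sig A i • uv A i := by
  rcases eq_or_ne (sig A i) 0 with h | h
  · have hlam : lam A i = 0 := by
      have := lam_nonneg A i
      have h2 : Real.sqrt (lam A i) = 0 := h
      nlinarith [Real.sq_sqrt this]
    have : (A *ᵥ wv A i) ⬝ᵥ (A *ᵥ wv A i) = 0 := by
      rw [Awv_dot]; simp [hlam]
    rw [dot_self_eq_zero this, h, zero_smul]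
  · rw [uv, smul_smul, mul_inv_cancel₀ h, one_smul]

lemma uv_dot_ne (A : Matrix (Fin a) (Fin b) ℝ) {i j : Fin b} (h : i ≠ j) :
    uv A i ⬝ᵥ uv A j = 0 := by
  rw [uv, uv, smul_dotProduct, dotProduct_smul, Awv_dot]
  simp [h]

lemma uv_dot_self (A : Matrix (Fin a) (Fin b) ℝ) (i : Fin b) : uv A i ⬝ᵥ uv A i ≤ 1 := by
  rw [uv, smul_dotProduct, dotProduct_smul, Awv_dot]
  simp only [if_pos rfl, smul_eq_mul]
  rcases eq_or_ne (sig A i) 0 with h | h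
  · simp [h]
  · have hlam : lam A i = Real.sqrt (lam A i) * Real.sqrt (lam A i) :=
      (Real.mul_self_sqrt (lam_nonneg A i)).symm
    rw [hlam]
    show (sig A i)⁻¹ * ((sig A i)⁻¹ * (sig A i * sig A i)) ≤ 1
    field_simp
    exact le_rfl

lemma uv_dot_Aw (A : Matrix (Fin a) (Fin b) ℝ) (i : Fin b) :
    uv A i ⬝ᵥ (A *ᵥ wv A i) = sig A i := by
  rw [uv, smul_dotProduct, Awv_dot, if_pos rfl, smul_eq_mul]
  rcases eq_or_ne (sig A i) 0 with h | h
  · have hlam : lam A i = 0 := by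
      have := lam_nonneg A i
      have h2 : Real.sqrt (lam A i) = 0 := h
      nlinarith [Real.sq_sqrt this]
    simp [hlam, h]
  · have hlam : lam A i = sig A i * sig A i := (Real.mul_self_sqrt (lam_nonneg A i)).symm
    rw [hlam]; field_simp

lemma nuclear_rep (A : Matrix (Fin a) (Fin b) ℝ) :
    nuclearNorm A = ∑ i, uv A i ⬝ᵥ (A *ᵥ wv A i) :=
  Finset.sum_congr rfl fun i _ => (uv_dot_Aw A i).symm

lemma bessel_uv (A : Matrix (Fin a) (Fin b) ℝ) (x : Fin a → ℝ) :
    ∑ i, (uv A i ⬝ᵥ x) ^ 2 ≤ x ⬝ᵥ x :=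
  bessel _ (fun i j h => uv_dot_ne A h) (uv_dot_self A) x

lemma bessel_wv (A : Matrix (Fin a) (Fin b) ℝ) (x : Fin b → ℝ) :
    ∑ i, (wv A i ⬝ᵥ x) ^ 2 ≤ x ⬝ᵥ x :=
  bessel _ (fun i j h => by rw [wv_dot]; simp [h]) (fun i => by rw [wv_dot]; simp) x

/-- Main trace-type bound: for families with the Bessel property. -/
lemma main_bound (C : Matrix (Fin a) (Fin b) ℝ) (U : Fin b → Fin a → ℝ) (W : Fin b → Fin b → ℝ)
    (hU : ∀ x, ∑ i, (U i ⬝ᵥ x) ^ 2 ≤ x ⬝ᵥ x) (hW : ∀ y, ∑ i, (W i ⬝ᵥ y) ^ 2 ≤ y ⬝ᵥ y) :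
    ∑ i, U i ⬝ᵥ (C *ᵥ W i) ≤ nuclearNorm C := by
  have step1 : ∀ i, U i ⬝ᵥ (C *ᵥ W i) = ∑ k, sig C k * ((wv C k ⬝ᵥ W i) * (U i ⬝ᵥ uv C k)) := by
    intro i
    rw [mulVec_expand C (W i), dot_sum]
    refine Finset.sum_congr rfl fun k _ => ?_
    rw [Awv_eq, smul_smul]
    rw [dotProduct_smul (wv C k ⬝ᵥ W i * sig C k) (U i) (uv C k)]
    simp only [smul_eq_mul]
    ring
  rw [Finset.sum_congr rfl (fun i _ => step1 i), Finset.sum_comm]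
  rw [nuclear_rep]
  apply Finset.sum_le_sum
  intro k _
  rw [← Finset.mul_sum, uv_dot_Aw]
  have hcs : ∑ i, (wv C k ⬝ᵥ W i) * (U i ⬝ᵥ uv C k) ≤ 1 := by
    have h2 : (∑ i, (wv C k ⬝ᵥ W i) * (U i ⬝ᵥ uv C k)) ^ 2 ≤
        (∑ i, (wv C k ⬝ᵥ W i) ^ 2) * ∑ i, (U i ⬝ᵥ uv C k) ^ 2 := by
      exact Finset.sum_mul_sq_le_sq_mul_sq Finset.univ
        (fun i => wv C k ⬝ᵥ W i) (fun i => U i ⬝ᵥ uv C k)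
    have hA : ∑ i, (wv C k ⬝ᵥ W i) ^ 2 ≤ 1 := by
      have h3 := hW (wv C k)
      have h4 : wv C k ⬝ᵥ wv C k = 1 := by rw [wv_dot]; simp
      calc ∑ i, (wv C k ⬝ᵥ W i) ^ 2 = ∑ i, (W i ⬝ᵥ wv C k) ^ 2 :=
            Finset.sum_congr rfl fun i _ => by rw [dotProduct_comm]
        _ ≤ 1 := by rw [← h4]; exact h3
    have hB : ∑ i, (U i ⬝ᵥ uv C k) ^ 2 ≤ 1 := le_trans (hU (uv C k)) (uv_dot_self C k)
    have hsum_nonneg : (0:ℝ) ≤ (∑ i, (wv C k ⬝ᵥ W i) ^ 2) := Finset.sum_nonneg fun i _ => sq_nonneg _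
    nlinarith [Finset.sum_nonneg (fun i (_ : i ∈ Finset.univ) => sq_nonneg (U i ⬝ᵥ uv C k))]
  calc sig C k * ∑ i, (wv C k ⬝ᵥ W i) * (U i ⬝ᵥ uv C k) ≤ sig C k * 1 :=
        mul_le_mul_of_nonneg_left hcs (sig_nonneg C k)
    _ = sig C k := mul_one _

end NucAux

namespace NucAux
variable {a b : ℕ}

lemma nuclear_nonneg (A : Matrix (Fin a) (Fin b) ℝ) : 0 ≤ nuclearNorm A :=
  Finset.sum_nonneg fun i _ => Real.sqrt_nonneg _

lemma nuclear_triangle (A B : Matrix (Fin a) (Fin b) ℝ) :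
    nuclearNorm (A + B) ≤ nuclearNorm A + nuclearNorm B := by
  rw [nuclear_rep (A + B)]
  have : ∀ i, uv (A+B) i ⬝ᵥ ((A+B) *ᵥ wv (A+B) i)
      = uv (A+B) i ⬝ᵥ (A *ᵥ wv (A+B) i) + uv (A+B) i ⬝ᵥ (B *ᵥ wv (A+B) i) := by
    intro i
    rw [Matrix.add_mulVec, dotProduct_add]
  rw [Finset.sum_congr rfl fun i _ => this i, Finset.sum_add_distrib]
  exact add_le_add
    (main_bound A (uv (A+B)) (wv (A+B)) (bessel_uv (A+B)) (bessel_wv (A+B)))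
    (main_bound B (uv (A+B)) (wv (A+B)) (bessel_uv (A+B)) (bessel_wv (A+B)))

lemma nuclear_smul (c : ℝ) (hc : 0 ≤ c) (A : Matrix (Fin a) (Fin b) ℝ) :
    nuclearNorm (c • A) = c * nuclearNorm A := by
  have key : ∀ (d : ℝ), 0 ≤ d → ∀ (M : Matrix (Fin a) (Fin b) ℝ),
      nuclearNorm (d • M) ≤ d * nuclearNorm M := by
    intro d hd M
    rw [nuclear_rep (d • M)]
    have : ∀ i, uv (d•M) i ⬝ᵥ ((d•M) *ᵥ wv (d•M) i)
        = d * (uv (d•M) i ⬝ᵥ (M *ᵥ wv (d•M) i)) := by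
      intro i
      rw [Matrix.smul_mulVec, dotProduct_smul, smul_eq_mul]
    rw [Finset.sum_congr rfl fun i _ => this i, ← Finset.mul_sum]
    exact mul_le_mul_of_nonneg_left
      (main_bound M (uv (d•M)) (wv (d•M)) (bessel_uv (d•M)) (bessel_wv (d•M))) hd
  rcases eq_or_lt_of_le hc with h0 | h0
  · subst h0
    refine le_antisymm (by simpa using key 0 le_rfl A) ?_
    simp [nuclear_nonneg]
  · refine le_antisymm (key c hc A) ?_
    have h2 := key c⁻¹ (inv_nonneg.mpr hc) (c • A)
    rw [smul_smul, inv_mul_cancel₀ (ne_of_gt h0), one_smul] at h2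
    calc c * nuclearNorm A ≤ c * (c⁻¹ * nuclearNorm (c • A)) :=
          mul_le_mul_of_nonneg_left h2 hc
      _ = nuclearNorm (c • A) := by field_simp

lemma nuclear_zero : nuclearNorm (0 : Matrix (Fin a) (Fin b) ℝ) = 0 := by
  rw [nuclear_rep]
  simp [Matrix.zero_mulVec]

lemma nuclear_pos {A : Matrix (Fin a) (Fin b) ℝ} (hA : A ≠ 0) : 0 < nuclearNorm A := by
  rcases lt_or_eq_of_le (nuclear_nonneg A) with h | h
  · exact h
  · exfalso
    apply hA
    have hlam : ∀ i, lam A i = 0 := by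
      intro i
      have hterm : ∀ j : Fin b, (0:ℝ) ≤ Real.sqrt (lam A j) := fun j => Real.sqrt_nonneg _
      have hzero : Real.sqrt (lam A i) = 0 := by
        have := Finset.sum_eq_zero_iff_of_nonneg (fun j (_ : j ∈ Finset.univ) => hterm j)
        exact (this.mp h.symm) i (Finset.mem_univ i)
      nlinarith [Real.sq_sqrt (lam_nonneg A i), lam_nonneg A i]
    have hAw : ∀ i, A *ᵥ wv A i = 0 := by
      intro i
      apply dot_self_eq_zero
      rw [Awv_dot, if_pos rfl, hlam]
    have hmv : ∀ x, A *ᵥ x = 0 := by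
      intro x
      rw [mulVec_expand]
      exact Finset.sum_eq_zero fun i _ => by rw [hAw i, smul_zero]
    ext z j
    have := congrFun (hmv (Pi.single j 1)) z
    simpa [Matrix.mulVec_single] using this

lemma sqrt_lam_le_spec (A : Matrix (Fin a) (Fin b) ℝ) (k : Fin b) :
    Real.sqrt (lam A k) ≤ specNorm A :=
  le_ciSup (f := fun i => Real.sqrt (lam A i)) (Set.Finite.bddAbove (Set.finite_range _)) k

lemma spec_nonneg (A : Matrix (Fin a) (Fin b) ℝ) (hb : 0 < b) : 0 ≤ specNorm A :=
  le_trans (Real.sqrt_nonneg _) (sqrt_lam_le_spec A ⟨0, hb⟩)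

lemma entry_le_spec (A : Matrix (Fin a) (Fin b) ℝ) (z : Fin a) (j : Fin b) :
    |A z j| ≤ specNorm A := by
  have hb : 0 < b := j.pos
  set ej : Fin b → ℝ := Pi.single j 1 with hej
  have hAej : A *ᵥ ej = fun v => A v j := by
    funext v; simp [hej, Matrix.mulVec_single]
  have h1 : (A *ᵥ ej) ⬝ᵥ (A *ᵥ ej) ≤ specNorm A ^ 2 := by
    rw [mulVec_dot]
    have hexp : (Aᴴ * A) *ᵥ ej = ∑ i, (wv A i ⬝ᵥ ej) • (lam A i • wv A i) := by
      conv_lhs => rw [vec_expand A ej]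
      rw [show (Aᴴ * A) *ᵥ (∑ i, (wv A i ⬝ᵥ ej) • wv A i) =
          (Aᴴ * A).mulVecLin (∑ i, (wv A i ⬝ᵥ ej) • wv A i) from rfl, map_sum]
      refine Finset.sum_congr rfl fun i _ => ?_
      rw [LinearMap.map_smul]
      show (wv A i ⬝ᵥ ej) • ((Aᴴ * A) *ᵥ wv A i) = _
      rw [eig_eq]
    rw [hexp, dot_sum]
    have hterm : ∀ i, ej ⬝ᵥ ((wv A i ⬝ᵥ ej) • (lam A i • wv A i))
        = lam A i * (wv A i ⬝ᵥ ej) ^ 2 := by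
      intro i
      rw [smul_smul, dotProduct_smul, smul_eq_mul, dotProduct_comm]
      ring
    rw [Finset.sum_congr rfl fun i _ => hterm i]
    have hbound : ∀ i, lam A i * (wv A i ⬝ᵥ ej) ^ 2 ≤ specNorm A ^ 2 * (wv A i ⬝ᵥ ej) ^ 2 := by
      intro i
      apply mul_le_mul_of_nonneg_right _ (sq_nonneg _)
      have := sqrt_lam_le_spec A i
      nlinarith [Real.sq_sqrt (lam_nonneg A i), Real.sqrt_nonneg (lam A i)]
    calc ∑ i, lam A i * (wv A i ⬝ᵥ ej) ^ 2 ≤ ∑ i, specNorm A ^ 2 * (wv A i ⬝ᵥ ej) ^ 2 :=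
          Finset.sum_le_sum fun i _ => hbound i
      _ = specNorm A ^ 2 * ∑ i, (wv A i ⬝ᵥ ej) ^ 2 := by rw [Finset.mul_sum]
      _ ≤ specNorm A ^ 2 * 1 := by
          apply mul_le_mul_of_nonneg_left _ (sq_nonneg _)
          have := bessel_wv A ej
          have hejd : ej ⬝ᵥ ej = 1 := by simp [hej, single_dotProduct]
          calc ∑ i, (wv A i ⬝ᵥ ej) ^ 2 ≤ ej ⬝ᵥ ej := this
            _ = 1 := hejd
      _ = specNorm A ^ 2 := mul_one _
  have h2 : (A z j) ^ 2 ≤ (A *ᵥ ej) ⬝ᵥ (A *ᵥ ej) := by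
    rw [hAej]
    have : (fun v => A v j) ⬝ᵥ (fun v => A v j) = ∑ v, (A v j) ^ 2 := by
      simp [dotProduct, sq]
    rw [this]
    exact Finset.single_le_sum (fun v (_ : v ∈ Finset.univ) => sq_nonneg (A v j))
      (Finset.mem_univ z)
  have h3 : (A z j) ^ 2 ≤ specNorm A ^ 2 := le_trans h2 h1
  calc |A z j| = Real.sqrt ((A z j) ^ 2) := (Real.sqrt_sq_eq_abs _).symm
    _ ≤ Real.sqrt (specNorm A ^ 2) := Real.sqrt_le_sqrt h3
    _ = |specNorm A| := Real.sqrt_sq_eq_abs _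
    _ = specNorm A := abs_of_nonneg (spec_nonneg A hb)

end NucAux


namespace CEAux

variable {V m : ℕ}

lemma Tpos (hV : 0 < V) (L : Matrix (Fin V) (Fin m) ℝ) (j : Fin m) :
    0 < ∑ v, Real.exp (L v j) :=
  Finset.sum_pos (fun v _ => Real.exp_pos _) ⟨⟨0, hV⟩, Finset.mem_univ _⟩

lemma sum_support (p : Fin V → ℝ) (hp : ∀ z, 0 ≤ p z) (hpsum : ∑ z, p z = 1) :
    ∑ z ∈ Finset.univ.filter (fun z => 0 < p z), p z = 1 := by
  rw [Finset.sum_filter_of_ne (fun z _ hz => lt_of_le_of_ne (hp z) (Ne.symm hz))]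
  exact hpsum

lemma CE_eq (hV : 0 < V) (piv : Fin m → ℝ) (p : Fin m → Fin V → ℝ)
    (hp : ∀ j z, 0 ≤ p j z) (hpsum : ∀ j, ∑ z, p j z = 1)
    (L : Matrix (Fin V) (Fin m) ℝ) :
    CEloss piv p L = ∑ j, piv j * (Real.log (∑ v, Real.exp (L v j)) -
      ∑ z ∈ Finset.univ.filter (fun z => 0 < p j z), p j z * L z j) := by
  rw [CEloss, ← Finset.sum_neg_distrib]
  refine Finset.sum_congr rfl fun j _ => ?_
  have hT := Tpos hV L j
  have per : ∀ z, p j z * Real.log (Real.exp (L z j) / ∑ v, Real.exp (L v j))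
      = p j z * L z j - p j z * Real.log (∑ v, Real.exp (L v j)) := by
    intro z
    rw [Real.log_div (Real.exp_ne_zero _) (ne_of_gt hT), Real.log_exp]
    ring
  rw [Finset.sum_congr rfl fun z _ => per z, Finset.sum_sub_distrib, ← Finset.sum_mul,
    sum_support (p j) (hp j) (hpsum j), one_mul]
  ring

end CEAux

namespace CEAux
variable {V m : ℕ}

lemma CE_sub_H (hV : 0 < V) (piv : Fin m → ℝ) (p : Fin m → Fin V → ℝ)
    (hp : ∀ j z, 0 ≤ p j z) (hpsum : ∀ j, ∑ z, p j z = 1)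
    (L : Matrix (Fin V) (Fin m) ℝ) :
    CEloss piv p L - entropyH piv p = ∑ j, piv j *
      (Real.log (∑ v, Real.exp (L v j)) -
        ∑ z ∈ Finset.univ.filter (fun z => 0 < p j z),
          p j z * (L z j - Real.log (p j z))) := by
  rw [CE_eq hV piv p hp hpsum, entropyH, sub_neg_eq_add, ← Finset.sum_add_distrib]
  refine Finset.sum_congr rfl fun j _ => ?_
  rw [Finset.sum_congr rfl (fun z (_ : z ∈ Finset.univ.filter fun z => 0 < p j z) =>
    mul_sub (p j z) (L z j) (Real.log (p j z))), Finset.sum_sub_distrib]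
  ring

/-- Per-`j` Gibbs-type lower bound. -/
lemma Ej_ge (hV : 0 < V) (p : Fin V → ℝ) (hp : ∀ z, 0 ≤ p z) (hpsum : ∑ z, p z = 1)
    (L : Fin V → ℝ) :
    1 - ∑ z ∈ Finset.univ.filter (fun z => 0 < p z), Real.exp (L z) / (∑ v, Real.exp (L v)) ≤
    Real.log (∑ v, Real.exp (L v)) -
      ∑ z ∈ Finset.univ.filter (fun z => 0 < p z), p z * (L z - Real.log (p z)) := by
  set T := ∑ v, Real.exp (L v) with hTdef
  have hT : 0 < T := Finset.sum_pos (fun v _ => Real.exp_pos _) ⟨⟨0, hV⟩, Finset.mem_univ _⟩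
  have key : ∀ z ∈ Finset.univ.filter (fun z => 0 < p z),
      p z * (L z - Real.log (p z)) - p z * Real.log T ≤ Real.exp (L z) / T - p z := by
    intro z hz
    have hpz : 0 < p z := (Finset.mem_filter.mp hz).2
    have hpos : 0 < Real.exp (L z) / (T * p z) := by positivity
    have hlog : Real.log (Real.exp (L z) / (T * p z)) = L z - Real.log (p z) - Real.log T := by
      rw [Real.log_div (Real.exp_ne_zero _) (by positivity),
        Real.log_mul (ne_of_gt hT) (ne_of_gt hpz), Real.log_exp]
      ring
    have := Real.log_le_sub_one_of_pos hpos
    rw [hlog] at this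
    have h2 := mul_le_mul_of_nonneg_left this (le_of_lt hpz)
    calc p z * (L z - Real.log (p z)) - p z * Real.log T
        = p z * (L z - Real.log (p z) - Real.log T) := by ring
      _ ≤ p z * (Real.exp (L z) / (T * p z) - 1) := h2
      _ = Real.exp (L z) / T - p z := by field_simp
  have hsum := Finset.sum_le_sum key
  rw [Finset.sum_sub_distrib, ← Finset.sum_mul, sum_support p hp hpsum, one_mul,
    Finset.sum_sub_distrib, sum_support p hp hpsum] at hsum
  linarith

lemma filter_sum_exp_le (hV : 0 < V) (p : Fin V → ℝ) (L : Fin V → ℝ) :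
    ∑ z ∈ Finset.univ.filter (fun z => 0 < p z), Real.exp (L z) / (∑ v, Real.exp (L v)) ≤ 1 := by
  have hT : 0 < ∑ v, Real.exp (L v) :=
    Finset.sum_pos (fun v _ => Real.exp_pos _) ⟨⟨0, hV⟩, Finset.mem_univ _⟩
  have := Finset.sum_le_sum_of_subset_of_nonneg (Finset.filter_subset (fun z => 0 < p z) Finset.univ)
    (fun z (_ : z ∈ Finset.univ) _ => le_of_lt (div_pos (Real.exp_pos (L z)) hT))
  calc ∑ z ∈ Finset.univ.filter (fun z => 0 < p z), Real.exp (L z) / (∑ v, Real.exp (L v))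
      ≤ ∑ z, Real.exp (L z) / (∑ v, Real.exp (L v)) := this
    _ = 1 := by rw [← Finset.sum_div]; field_simp

lemma filter_sum_exp_le' (hV : 0 < V) (p : Fin V → ℝ) (L : Fin V → ℝ) {v₀ : Fin V}
    (hv₀ : ¬ 0 < p v₀) :
    ∑ z ∈ Finset.univ.filter (fun z => 0 < p z), Real.exp (L z) / (∑ v, Real.exp (L v)) ≤
      1 - Real.exp (L v₀) / (∑ v, Real.exp (L v)) := by
  have hT : 0 < ∑ v, Real.exp (L v) :=
    Finset.sum_pos (fun v _ => Real.exp_pos _) ⟨⟨0, hV⟩, Finset.mem_univ _⟩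
  have hsub : Finset.univ.filter (fun z => 0 < p z) ⊆ Finset.univ.erase v₀ := by
    intro z hz
    rcases Finset.mem_filter.mp hz with ⟨_, hz2⟩
    exact Finset.mem_erase.mpr ⟨fun h => hv₀ (h ▸ hz2), Finset.mem_univ z⟩
  have h1 := Finset.sum_le_sum_of_subset_of_nonneg hsub
    (fun z _ _ => le_of_lt (div_pos (Real.exp_pos (L z)) hT))
  have h2 : ∑ z ∈ Finset.univ.erase v₀, Real.exp (L z) / (∑ v, Real.exp (L v))
      = 1 - Real.exp (L v₀) / (∑ v, Real.exp (L v)) := by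
    have := Finset.add_sum_erase Finset.univ
      (fun z => Real.exp (L z) / (∑ v, Real.exp (L v))) (Finset.mem_univ v₀)
    have htot : ∑ z, Real.exp (L z) / (∑ v, Real.exp (L v)) = 1 := by
      rw [← Finset.sum_div]; field_simp
    linarith
  linarith

lemma CE_ge_H (hV : 0 < V) (piv : Fin m → ℝ) (hpiv : ∀ j, 0 < piv j)
    (p : Fin m → Fin V → ℝ) (hp : ∀ j z, 0 ≤ p j z) (hpsum : ∀ j, ∑ z, p j z = 1)
    (L : Matrix (Fin V) (Fin m) ℝ) : entropyH piv p ≤ CEloss piv p L := by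
  have h := CE_sub_H hV piv p hp hpsum L
  have hterm : ∀ j ∈ Finset.univ, (0:ℝ) ≤ piv j *
      (Real.log (∑ v, Real.exp (L v j)) -
        ∑ z ∈ Finset.univ.filter (fun z => 0 < p j z), p j z * (L z j - Real.log (p j z))) := by
    intro j _
    apply mul_nonneg (le_of_lt (hpiv j))
    have h1 := Ej_ge hV (p j) (hp j) (hpsum j) (fun z => L z j)
    have h2 := filter_sum_exp_le hV (p j) (fun z => L z j)
    linarith
  have := Finset.sum_nonneg hterm
  linarith

lemma CE_gt_H (hV : 0 < V) (piv : Fin m → ℝ) (hpiv : ∀ j, 0 < piv j)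
    (p : Fin m → Fin V → ℝ) (hp : ∀ j z, 0 ≤ p j z) (hpsum : ∀ j, ∑ z, p j z = 1)
    {j₀ : Fin m} {v₀ : Fin V} (hv₀ : ¬ 0 < p j₀ v₀)
    (L : Matrix (Fin V) (Fin m) ℝ) : entropyH piv p < CEloss piv p L := by
  have h := CE_sub_H hV piv p hp hpsum L
  set E : Fin m → ℝ := fun j => piv j *
      (Real.log (∑ v, Real.exp (L v j)) -
        ∑ z ∈ Finset.univ.filter (fun z => 0 < p j z), p j z * (L z j - Real.log (p j z)))
    with hE
  have hterm : ∀ j ∈ Finset.univ, (0:ℝ) ≤ E j := by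
    intro j _
    apply mul_nonneg (le_of_lt (hpiv j))
    have h1 := Ej_ge hV (p j) (hp j) (hpsum j) (fun z => L z j)
    have h2 := filter_sum_exp_le hV (p j) (fun z => L z j)
    linarith
  have hj₀ : 0 < E j₀ := by
    apply mul_pos (hpiv j₀)
    have h1 := Ej_ge hV (p j₀) (hp j₀) (hpsum j₀) (fun z => L z j₀)
    have h2 := filter_sum_exp_le' hV (p j₀) (fun z => L z j₀) hv₀
    have hT : 0 < ∑ v, Real.exp (L v j₀) :=
      Finset.sum_pos (fun v _ => Real.exp_pos _) ⟨⟨0, hV⟩, Finset.mem_univ _⟩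
    have h3 : 0 < Real.exp (L v₀ j₀) / (∑ v, Real.exp (L v j₀)) :=
      div_pos (Real.exp_pos _) hT
    linarith
  have hsum : 0 < ∑ j, E j :=
    lt_of_lt_of_le hj₀ (Finset.single_le_sum hterm (Finset.mem_univ j₀))
  linarith

end CEAux

namespace CEAux
variable {V m : ℕ}

lemma gibbs_aux (hV : 0 < V) (q x : Fin V → ℝ) (hq : ∀ v, 0 < q v) (hqsum : ∑ v, q v = 1) :
    ∑ v, q v * (x v - Real.log (q v)) ≤ Real.log (∑ v, Real.exp (x v)) := by
  set T := ∑ v, Real.exp (x v) with hTdef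
  have hT : 0 < T := Finset.sum_pos (fun v _ => Real.exp_pos _) ⟨⟨0, hV⟩, Finset.mem_univ _⟩
  have key : ∀ v ∈ Finset.univ, q v * (x v - Real.log (q v)) - q v * Real.log T
      ≤ Real.exp (x v) / T - q v := by
    intro v _
    have hTq : 0 < T * q v := mul_pos hT (hq v)
    have hpos : 0 < Real.exp (x v) / (T * q v) := div_pos (Real.exp_pos _) hTq
    have hlog : Real.log (Real.exp (x v) / (T * q v))
        = x v - Real.log (q v) - Real.log T := by
      rw [Real.log_div (Real.exp_ne_zero _) (ne_of_gt hTq),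
        Real.log_mul (ne_of_gt hT) (ne_of_gt (hq v)), Real.log_exp]
      ring
    have hle := Real.log_le_sub_one_of_pos hpos
    rw [hlog] at hle
    have h2 := mul_le_mul_of_nonneg_left hle (le_of_lt (hq v))
    calc q v * (x v - Real.log (q v)) - q v * Real.log T
        = q v * (x v - Real.log (q v) - Real.log T) := by ring
      _ ≤ q v * (Real.exp (x v) / (T * q v) - 1) := h2
      _ = Real.exp (x v) / T - q v := by
          have hTne := ne_of_gt hT
          have hqne := ne_of_gt (hq v)
          field_simp
  have hsum := Finset.sum_le_sum key
  rw [Finset.sum_sub_distrib, ← Finset.sum_mul, hqsum, one_mul, Finset.sum_sub_distrib,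
    hqsum, ← Finset.sum_div] at hsum
  rw [div_self (ne_of_gt hT)] at hsum
  linarith

lemma lse_convex (hV : 0 < V) (x y : Fin V → ℝ) (θ : ℝ) (h0 : 0 ≤ θ) (h1 : θ ≤ 1) :
    Real.log (∑ v, Real.exp ((1 - θ) * x v + θ * y v)) ≤
      (1 - θ) * Real.log (∑ v, Real.exp (x v)) + θ * Real.log (∑ v, Real.exp (y v)) := by
  set c : Fin V → ℝ := fun v => (1 - θ) * x v + θ * y v with hc
  set Tc := ∑ v, Real.exp (c v) with hTc
  have hTcpos : 0 < Tc := Finset.sum_pos (fun v _ => Real.exp_pos _) ⟨⟨0, hV⟩, Finset.mem_univ _⟩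
  set q : Fin V → ℝ := fun v => Real.exp (c v) / Tc with hq
  have hqpos : ∀ v, 0 < q v := fun v => div_pos (Real.exp_pos _) hTcpos
  have hqsum : ∑ v, q v = 1 := by
    rw [hq, ← Finset.sum_div, div_self (ne_of_gt hTcpos)]
  have hlogq : ∀ v, Real.log (q v) = c v - Real.log Tc := by
    intro v
    rw [hq, Real.log_div (Real.exp_ne_zero _) (ne_of_gt hTcpos), Real.log_exp]
  have heq : Real.log Tc = ∑ v, q v * (c v - Real.log (q v)) := by
    have : ∀ v, q v * (c v - Real.log (q v)) = q v * Real.log Tc := by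
      intro v; rw [hlogq v]; ring
    rw [Finset.sum_congr rfl fun v _ => this v, ← Finset.sum_mul, hqsum, one_mul]
  have hsplit : ∀ v, q v * (c v - Real.log (q v))
      = (1 - θ) * (q v * (x v - Real.log (q v))) + θ * (q v * (y v - Real.log (q v))) := by
    intro v; rw [hc]; ring
  rw [heq, Finset.sum_congr rfl fun v _ => hsplit v, Finset.sum_add_distrib,
    ← Finset.mul_sum, ← Finset.mul_sum]
  have gx := gibbs_aux hV q x hqpos hqsum
  have gy := gibbs_aux hV q y hqpos hqsum
  have := mul_le_mul_of_nonneg_left gx (by linarith : (0:ℝ) ≤ 1 - θ)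
  have := mul_le_mul_of_nonneg_left gy h0
  nlinarith

lemma CE_convex (hV : 0 < V) (piv : Fin m → ℝ) (hpiv : ∀ j, 0 ≤ piv j)
    (p : Fin m → Fin V → ℝ) (hp : ∀ j z, 0 ≤ p j z) (hpsum : ∀ j, ∑ z, p j z = 1)
    (X Y : Matrix (Fin V) (Fin m) ℝ) (θ : ℝ) (h0 : 0 ≤ θ) (h1 : θ ≤ 1) :
    CEloss piv p ((1 - θ) • X + θ • Y) ≤
      (1 - θ) * CEloss piv p X + θ * CEloss piv p Y := by
  have hM : ∀ z j, ((1 - θ) • X + θ • Y) z j = (1 - θ) * X z j + θ * Y z j := by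
    intro z j
    simp [Matrix.add_apply, Matrix.smul_apply, smul_eq_mul]
  rw [CE_eq hV piv p hp hpsum, CE_eq hV piv p hp hpsum, CE_eq hV piv p hp hpsum]
  rw [Finset.mul_sum, Finset.mul_sum, ← Finset.sum_add_distrib]
  apply Finset.sum_le_sum
  intro j _
  have hlse : Real.log (∑ v, Real.exp (((1 - θ) • X + θ • Y) v j)) ≤
      (1 - θ) * Real.log (∑ v, Real.exp (X v j)) + θ * Real.log (∑ v, Real.exp (Y v j)) := by
    have := lse_convex hV (fun v => X v j) (fun v => Y v j) θ h0 h1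
    have hrw : ∀ v, ((1 - θ) • X + θ • Y) v j = (1 - θ) * X v j + θ * Y v j := fun v => hM v j
    rw [Finset.sum_congr rfl fun v _ => by rw [hrw v]]
    exact this
  have hlin : ∑ z ∈ Finset.univ.filter (fun z => 0 < p j z), p j z * ((1 - θ) • X + θ • Y) z j
      = (1 - θ) * ∑ z ∈ Finset.univ.filter (fun z => 0 < p j z), p j z * X z j
        + θ * ∑ z ∈ Finset.univ.filter (fun z => 0 < p j z), p j z * Y z j := by
    rw [Finset.mul_sum, Finset.mul_sum, ← Finset.sum_add_distrib]
    refine Finset.sum_congr rfl fun z _ => ?_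
    rw [hM z j]; ring
  have hpj := hpiv j
  calc piv j * (Real.log (∑ v, Real.exp (((1 - θ) • X + θ • Y) v j)) -
        ∑ z ∈ Finset.univ.filter (fun z => 0 < p j z), p j z * ((1 - θ) • X + θ • Y) z j)
      ≤ piv j * ((1 - θ) * (Real.log (∑ v, Real.exp (X v j)) -
          ∑ z ∈ Finset.univ.filter (fun z => 0 < p j z), p j z * X z j)
        + θ * (Real.log (∑ v, Real.exp (Y v j)) -
          ∑ z ∈ Finset.univ.filter (fun z => 0 < p j z), p j z * Y z j)) := by
        apply mul_le_mul_of_nonneg_left _ hpj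
        rw [hlin]
        linarith
    _ = piv j * ((1 - θ) * (Real.log (∑ v, Real.exp (X v j)) -
          ∑ z ∈ Finset.univ.filter (fun z => 0 < p j z), p j z * X z j))
        + piv j * (θ * (Real.log (∑ v, Real.exp (Y v j)) -
          ∑ z ∈ Finset.univ.filter (fun z => 0 < p j z), p j z * Y z j)) := by ring
    _ = _ := by ring

end CEAux

namespace CEAux
variable {V m : ℕ}

/-- Upper bound for CE along the regularization path. -/
lemma CE_UB (hV : 0 < V) (piv : Fin m → ℝ) (hpiv : ∀ j, 0 ≤ piv j) (hpisum : ∑ j, piv j = 1)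
    (p : Fin m → Fin V → ℝ) (hp : ∀ j z, 0 ≤ p j z) (hpsum : ∀ j, ∑ z, p j z = 1)
    (Lmm : Matrix (Fin V) (Fin m) ℝ)
    (hF1 : ∀ j z z', 0 < p j z → 0 < p j z' → Lmm z j = Lmm z' j)
    (hF2 : ∀ j z v, 0 < p j z → ¬ 0 < p j v → 1 ≤ Lmm z j - Lmm v j)
    (Lin : Matrix (Fin V) (Fin m) ℝ) (s : ℝ)
    (hs : ∀ z j, |Lin z j| ≤ s)
    (hLin : ∀ j z z', 0 < p j z → 0 < p j z' →
        Lin z j - Lin z' j = Real.log (p j z / p j z'))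
    (r : ℝ) (hr : 0 ≤ r) :
    CEloss piv p (Lin + r • Lmm) ≤
      entropyH piv p + (V : ℝ) * Real.exp (2 * s) * Real.exp (-r) := by
  set L : Matrix (Fin V) (Fin m) ℝ := Lin + r • Lmm with hLdef
  have hLapp : ∀ z j, L z j = Lin z j + r * Lmm z j := by
    intro z j; simp [hLdef, Matrix.add_apply, Matrix.smul_apply, smul_eq_mul]
  set ε : ℝ := (V : ℝ) * Real.exp (2 * s) * Real.exp (-r) with hε
  have hεpos : 0 < ε := by positivity
  have key : ∀ j, Real.log (∑ v, Real.exp (L v j)) -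
      ∑ z ∈ Finset.univ.filter (fun z => 0 < p j z), p j z * (L z j - Real.log (p j z)) ≤ ε := by
    intro j
    -- pick z₀ in the support of p j
    obtain ⟨z₀, hz₀ne⟩ : ∃ z, p j z ≠ 0 := by
      by_contra h
      push_neg at h
      have hz : ∑ z, p j z = 0 := Finset.sum_eq_zero fun z _ => h z
      rw [hpsum j] at hz; norm_num at hz
    have hz₀ : 0 < p j z₀ := lt_of_le_of_ne (hp j z₀) (Ne.symm hz₀ne)
    have hpz₀le : p j z₀ ≤ 1 := by
      rw [← hpsum j]
      exact Finset.single_le_sum (fun z (_ : z ∈ Finset.univ) => hp j z) (Finset.mem_univ z₀)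
    -- constant value on the support
    have hconst : ∀ z, 0 < p j z → L z j - Real.log (p j z) = L z₀ j - Real.log (p j z₀) := by
      intro z hz
      have h1 : Lin z j - Lin z₀ j = Real.log (p j z) - Real.log (p j z₀) := by
        rw [hLin j z z₀ hz hz₀, Real.log_div (ne_of_gt hz) (ne_of_gt hz₀)]
      have h2 : Lmm z j = Lmm z₀ j := hF1 j z z₀ hz hz₀
      rw [hLapp z j, hLapp z₀ j, h2]
      linarith
    -- linear part equals the constant
    have hlinpart : ∑ z ∈ Finset.univ.filter (fun z => 0 < p j z),
        p j z * (L z j - Real.log (p j z)) = L z₀ j - Real.log (p j z₀) := by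
      rw [Finset.sum_congr rfl (fun z hz => by
        rw [hconst z (Finset.mem_filter.mp hz).2]), ← Finset.sum_mul,
        sum_support (p j) (hp j) (hpsum j), one_mul]
    -- bound the partition function
    have hTsplit := Finset.sum_filter_add_sum_filter_not Finset.univ
      (fun z => 0 < p j z) (fun v => Real.exp (L v j))
    have hin : ∑ v ∈ Finset.univ.filter (fun z => 0 < p j z), Real.exp (L v j)
        = Real.exp (L z₀ j) / p j z₀ := by
      have hterm : ∀ v ∈ Finset.univ.filter (fun z => 0 < p j z),
          Real.exp (L v j) = p j v * (Real.exp (L z₀ j) / p j z₀) := by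
        intro v hv
        have hpv := (Finset.mem_filter.mp hv).2
        have : L v j - L z₀ j = Real.log (p j v) - Real.log (p j z₀) := by
          have := hconst v hpv
          have hlz : Real.log (p j v) = Real.log (p j v) := rfl
          linarith
        have : Real.exp (L v j) = Real.exp (L z₀ j) * (p j v / p j z₀) := by
          rw [show L v j = L z₀ j + (Real.log (p j v) - Real.log (p j z₀)) by linarith,
            Real.exp_add, ← Real.log_div (ne_of_gt hpv) (ne_of_gt hz₀),
            Real.exp_log (div_pos hpv hz₀)]
        rw [this]; ring
      rw [Finset.sum_congr rfl hterm, ← Finset.sum_mul,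
        sum_support (p j) (hp j) (hpsum j), one_mul]
    have hout : ∑ v ∈ Finset.univ.filter (fun z => ¬ 0 < p j z), Real.exp (L v j)
        ≤ (V : ℝ) * (Real.exp (L z₀ j) * Real.exp (2 * s) * Real.exp (-r)) := by
      have hterm : ∀ v ∈ Finset.univ.filter (fun z => ¬ 0 < p j z),
          Real.exp (L v j) ≤ Real.exp (L z₀ j) * Real.exp (2 * s) * Real.exp (-r) := by
        intro v hv
        have hpv := (Finset.mem_filter.mp hv).2
        have hmm := hF2 j z₀ v hz₀ hpv
        have hb1 := abs_le.mp (hs v j)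
        have hb2 := abs_le.mp (hs z₀ j)
        have hLv : L v j ≤ L z₀ j + 2 * s + (-r) := by
          rw [hLapp v j, hLapp z₀ j]
          nlinarith [hr]
        calc Real.exp (L v j) ≤ Real.exp (L z₀ j + 2 * s + (-r)) := Real.exp_le_exp.mpr hLv
          _ = Real.exp (L z₀ j) * Real.exp (2 * s) * Real.exp (-r) := by
              rw [← Real.exp_add, ← Real.exp_add]
        
      calc ∑ v ∈ Finset.univ.filter (fun z => ¬ 0 < p j z), Real.exp (L v j)
          ≤ ∑ _v ∈ Finset.univ.filter (fun z => ¬ 0 < p j z),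
            Real.exp (L z₀ j) * Real.exp (2 * s) * Real.exp (-r) := Finset.sum_le_sum hterm
        _ = (Finset.univ.filter (fun z : Fin V => ¬ 0 < p j z)).card *
            (Real.exp (L z₀ j) * Real.exp (2 * s) * Real.exp (-r)) := by
            rw [Finset.sum_const, nsmul_eq_mul]
        _ ≤ (V : ℝ) * (Real.exp (L z₀ j) * Real.exp (2 * s) * Real.exp (-r)) := by
            apply mul_le_mul_of_nonneg_right _ (by positivity)
            have := Finset.card_filter_le Finset.univ (fun z : Fin V => ¬ 0 < p j z)
            calc ((Finset.univ.filter (fun z : Fin V => ¬ 0 < p j z)).card : ℝ)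
                ≤ (Finset.univ : Finset (Fin V)).card := by exact_mod_cast this
              _ = (V : ℝ) := by simp
    have hTle : ∑ v, Real.exp (L v j) ≤ (Real.exp (L z₀ j) / p j z₀) * (1 + ε) := by
      have h1 : (V : ℝ) * (Real.exp (L z₀ j) * Real.exp (2 * s) * Real.exp (-r))
          ≤ (Real.exp (L z₀ j) / p j z₀) * ε := by
        rw [hε]
        rw [div_mul_eq_mul_div, le_div_iff₀ hz₀]
        have hX : (0:ℝ) ≤ (V : ℝ) * (Real.exp (L z₀ j) * Real.exp (2 * s) * Real.exp (-r)) := by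
          positivity
        nlinarith [mul_le_mul_of_nonneg_left hpz₀le hX]
      calc ∑ v, Real.exp (L v j)
          = Real.exp (L z₀ j) / p j z₀ +
            ∑ v ∈ Finset.univ.filter (fun z => ¬ 0 < p j z), Real.exp (L v j) := by
            rw [← hTsplit, hin]
        _ ≤ Real.exp (L z₀ j) / p j z₀ + (Real.exp (L z₀ j) / p j z₀) * ε := by
            have := le_trans hout h1
            linarith
        _ = (Real.exp (L z₀ j) / p j z₀) * (1 + ε) := by ring
    have hTpos : 0 < ∑ v, Real.exp (L v j) :=
      Finset.sum_pos (fun v _ => Real.exp_pos _) ⟨⟨0, hV⟩, Finset.mem_univ _⟩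
    have hlogT : Real.log (∑ v, Real.exp (L v j)) ≤
        L z₀ j - Real.log (p j z₀) + ε := by
      calc Real.log (∑ v, Real.exp (L v j))
          ≤ Real.log ((Real.exp (L z₀ j) / p j z₀) * (1 + ε)) :=
            Real.log_le_log hTpos hTle
        _ = L z₀ j - Real.log (p j z₀) + Real.log (1 + ε) := by
            rw [Real.log_mul (by positivity) (by positivity),
              Real.log_div (Real.exp_ne_zero _) (ne_of_gt hz₀), Real.log_exp]
        _ ≤ L z₀ j - Real.log (p j z₀) + ε := by
            have := Real.log_le_sub_one_of_pos (show (0:ℝ) < 1 + ε by linarith)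
            linarith
    rw [hlinpart]
    linarith
  have hdiff := CE_sub_H hV piv p hp hpsum L
  have hsum : ∑ j, piv j * (Real.log (∑ v, Real.exp (L v j)) -
      ∑ z ∈ Finset.univ.filter (fun z => 0 < p j z),
        p j z * (L z j - Real.log (p j z))) ≤ ∑ j, piv j * ε := by
    apply Finset.sum_le_sum
    intro j _
    exact mul_le_mul_of_nonneg_left (key j) (hpiv j)
  rw [← Finset.sum_mul, hpisum, one_mul] at hsum
  linarith

end CEAux

/-- with `L̂_B` minimizers of `CE` over nuclear-norm balls, `L^mm` an NTP-SVM
minimizer, `L^in` the log-odds element of `F`, and `R(B) = (‖L̂_B‖_* − ‖L^in‖_*)/‖L^mm‖_*`: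
(a) `L_R = L^in + R L^mm` is feasible with `CE(L_R) ≤ H + V e^{2‖L^in‖₂} e^{−R}`;
(b) `R(B) → ∞` and `R(B)/‖L̂_B‖_* → 1/‖L^mm‖_*`; (c) `CE(L̂_B) → H`. -/
theorem stmt_16 (V m : ℕ) (hV : 2 ≤ V) (hm : 0 < m)
    (piv : Fin m → ℝ) (hpiv : ∀ j, 0 < piv j) (hpisum : ∑ j, piv j = 1)
    (p : Fin m → Fin V → ℝ) (hp : ∀ j z, 0 ≤ p j z) (hpsum : ∀ j, ∑ z, p j z = 1)
    (hsparse : ∃ j, ∃ v, ¬ 0 < p j v)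
    (Lhat : ℝ → Matrix (Fin V) (Fin m) ℝ)
    (hmin : ∀ B : ℝ, 0 < B → nuclearNorm (Lhat B) ≤ B ∧
        ∀ L : Matrix (Fin V) (Fin m) ℝ, nuclearNorm L ≤ B →
          CEloss piv p (Lhat B) ≤ CEloss piv p L)
    (Lmm : Matrix (Fin V) (Fin m) ℝ)
    (hLmmF : svmFeasibleP p Lmm)
    (hLmmMin : ∀ L : Matrix (Fin V) (Fin m) ℝ, svmFeasibleP p L →
        nuclearNorm Lmm ≤ nuclearNorm L)
    (Lin : Matrix (Fin V) (Fin m) ℝ)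
    (hLinF : Lin ∈ Fsub p)
    (hLin : ∀ j z z', 0 < p j z → 0 < p j z' →
        Lin z j - Lin z' j = Real.log (p j z / p j z'))
    (R : ℝ → ℝ)
    (hR : ∀ B, R B = (nuclearNorm (Lhat B) - nuclearNorm Lin) / nuclearNorm Lmm) :
    (∀ B : ℝ, nuclearNorm Lin < B →
        nuclearNorm (Lin + R B • Lmm) ≤ B ∧
        CEloss piv p (Lin + R B • Lmm) ≤
          entropyH piv p + (V : ℝ) * Real.exp (2 * specNorm Lin) * Real.exp (-(R B))) ∧
    Tendsto R atTop atTop ∧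
    Tendsto (fun B => R B / nuclearNorm (Lhat B)) atTop (𝓝 (nuclearNorm Lmm)⁻¹) ∧
    Tendsto (fun B => CEloss piv p (Lhat B)) atTop (𝓝 (entropyH piv p)) := by
  classical
  have hV0 : 0 < V := lt_of_lt_of_le (by norm_num) hV
  obtain ⟨j₀, v₀, hv₀⟩ := hsparse
  -- Lmm is nonzero, hence has positive nuclear norm
  have hLmm_ne : Lmm ≠ 0 := by
    obtain ⟨z₀, hz₀ne⟩ : ∃ z, p j₀ z ≠ 0 := by
      by_contra h
      push_neg at h
      have hz : ∑ z, p j₀ z = 0 := Finset.sum_eq_zero fun z _ => h z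
      rw [hpsum j₀] at hz; norm_num at hz
    have hz₀ : 0 < p j₀ z₀ := lt_of_le_of_ne (hp j₀ z₀) (Ne.symm hz₀ne)
    intro h0
    have h1 := hLmmF.2 j₀ z₀ v₀ hz₀ hv₀
    rw [h0] at h1
    simp at h1
    linarith
  have hd : 0 < nuclearNorm Lmm := NucAux.nuclear_pos hLmm_ne
  have hc : 0 ≤ nuclearNorm Lin := NucAux.nuclear_nonneg Lin
  set c := nuclearNorm Lin with hcdef
  set d := nuclearNorm Lmm with hddef
  set K := (V : ℝ) * Real.exp (2 * specNorm Lin) with hKdef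
  have hKpos : 0 < K := by positivity
  have hUB : ∀ r : ℝ, 0 ≤ r → CEloss piv p (Lin + r • Lmm) ≤
      entropyH piv p + K * Real.exp (-r) := fun r hr =>
    CEAux.CE_UB hV0 piv (fun j => (hpiv j).le) hpisum p hp hpsum Lmm hLmmF.1 hLmmF.2
      Lin (specNorm Lin) (fun z j => NucAux.entry_le_spec Lin z j) hLin r hr
  have hgt : ∀ L : Matrix (Fin V) (Fin m) ℝ, entropyH piv p < CEloss piv p L :=
    fun L => CEAux.CE_gt_H hV0 piv hpiv p hp hpsum hv₀ L
  -- the minimizer saturates the nuclear norm ball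
  have hsat : ∀ B : ℝ, 0 < B → nuclearNorm (Lhat B) = B := by
    intro B hB
    obtain ⟨hball, hopt⟩ := hmin B hB
    by_contra hne
    have hlt : nuclearNorm (Lhat B) < B := lt_of_le_of_ne hball hne
    set ε := CEloss piv p (Lhat B) - entropyH piv p with hεdef
    have hε : 0 < ε := by have := hgt (Lhat B); linarith
    set t := |Real.log (K / ε)| + 1 with htdef
    have ht0 : 0 ≤ t := by positivity
    have hlt2 : CEloss piv p (Lin + t • Lmm) < CEloss piv p (Lhat B) := by
      have h1 := hUB t ht0
      have h2 : K * Real.exp (-t) < ε := by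
        have hlog : Real.log (K / ε) < t := by
          have := le_abs_self (Real.log (K / ε)); linarith
        have h3 : Real.exp (-t) < ε / K := by
          rw [show ε / K = Real.exp (Real.log (ε / K)) from
            (Real.exp_log (by positivity)).symm]
          apply Real.exp_lt_exp.mpr
          rw [Real.log_div (ne_of_gt hε) (ne_of_gt hKpos)]
          rw [Real.log_div (ne_of_gt hKpos) (ne_of_gt hε)] at hlog
          linarith
        calc K * Real.exp (-t) < K * (ε / K) := mul_lt_mul_of_pos_left h3 hKpos
          _ = ε := by field_simp
      calc CEloss piv p (Lin + t • Lmm) ≤ entropyH piv p + K * Real.exp (-t) := h1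
        _ < entropyH piv p + ε := by linarith
        _ = CEloss piv p (Lhat B) := by rw [hεdef]; ring
    set N := c + t * d with hNdef
    have hN0 : 0 ≤ N := by nlinarith
    have hN' : nuclearNorm (Lin + t • Lmm) ≤ N := by
      calc nuclearNorm (Lin + t • Lmm)
          ≤ nuclearNorm Lin + nuclearNorm (t • Lmm) := NucAux.nuclear_triangle _ _
        _ = N := by rw [NucAux.nuclear_smul t ht0]
    have hNpos : (0:ℝ) < N + 1 := by linarith
    set θ := min 1 ((B - nuclearNorm (Lhat B)) / (N + 1)) with hθdef
    have hθpos : 0 < θ := lt_min one_pos (div_pos (by linarith) hNpos)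
    have hθ1 : θ ≤ 1 := min_le_left _ _
    set M := (1 - θ) • Lhat B + θ • (Lin + t • Lmm) with hMdef
    have hθN : θ * (N + 1) ≤ B - nuclearNorm (Lhat B) := by
      have h4 : θ ≤ (B - nuclearNorm (Lhat B)) / (N + 1) := min_le_right _ _
      rw [← le_div_iff₀ hNpos]
      exact h4
    have hMnorm : nuclearNorm M ≤ B := by
      have hhat0 : 0 ≤ nuclearNorm (Lhat B) := NucAux.nuclear_nonneg _
      calc nuclearNorm M
          ≤ nuclearNorm ((1 - θ) • Lhat B) + nuclearNorm (θ • (Lin + t • Lmm)) :=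
            NucAux.nuclear_triangle _ _
        _ = (1 - θ) * nuclearNorm (Lhat B) + θ * nuclearNorm (Lin + t • Lmm) := by
            rw [NucAux.nuclear_smul _ (by linarith), NucAux.nuclear_smul _ hθpos.le]
        _ ≤ (1 - θ) * nuclearNorm (Lhat B) + θ * N := by nlinarith
        _ = nuclearNorm (Lhat B) + θ * (N - nuclearNorm (Lhat B)) := by ring
        _ ≤ nuclearNorm (Lhat B) + θ * (N + 1) := by nlinarith
        _ ≤ nuclearNorm (Lhat B) + (B - nuclearNorm (Lhat B)) := by linarith
        _ = B := by ring
    have hMCE : CEloss piv p M < CEloss piv p (Lhat B) := by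
      have hconv := CEAux.CE_convex hV0 piv (fun j => (hpiv j).le) p hp hpsum
        (Lhat B) (Lin + t • Lmm) θ hθpos.le hθ1
      nlinarith
    exact absurd (hopt M hMnorm) (not_le.mpr hMCE)
  have hReq : ∀ B : ℝ, 0 < B → R B = (B - c) / d := by
    intro B hB
    rw [hR, hsat B hB]
  -- part (a)
  have parta : ∀ B : ℝ, nuclearNorm Lin < B →
      nuclearNorm (Lin + R B • Lmm) ≤ B ∧
      CEloss piv p (Lin + R B • Lmm) ≤
        entropyH piv p + (V : ℝ) * Real.exp (2 * specNorm Lin) * Real.exp (-(R B)) := by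
    intro B hB
    have hB0 : 0 < B := lt_of_le_of_lt hc hB
    have hRB : R B = (B - c) / d := hReq B hB0
    have hRpos : 0 ≤ R B := by
      rw [hRB]
      apply div_nonneg _ hd.le
      linarith
    constructor
    · calc nuclearNorm (Lin + R B • Lmm)
          ≤ nuclearNorm Lin + nuclearNorm (R B • Lmm) := NucAux.nuclear_triangle _ _
        _ = c + R B * d := by rw [NucAux.nuclear_smul _ hRpos]
        _ = B := by rw [hRB]; field_simp; ring
    · exact hUB (R B) hRpos
  -- part (b1)
  have hb1 : Tendsto R atTop atTop := by
    have he : (fun B : ℝ => (B - c) / d) =ᶠ[atTop] R :=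
      (eventually_gt_atTop 0).mono fun B hB => (hReq B hB).symm
    apply Tendsto.congr' he
    apply Tendsto.atTop_div_const hd
    have := tendsto_atTop_add_const_right atTop (-c) (tendsto_id (α := ℝ))
    simpa [sub_eq_add_neg] using this
  -- part (b2)
  have hb2 : Tendsto (fun B => R B / nuclearNorm (Lhat B)) atTop (𝓝 d⁻¹) := by
    have he : (fun B : ℝ => (1 - c / B) / d) =ᶠ[atTop]
        (fun B => R B / nuclearNorm (Lhat B)) := by
      filter_upwards [eventually_gt_atTop 0] with B hB
      rw [hReq B hB, hsat B hB, one_sub_div (ne_of_gt hB), div_div, div_div, mul_comm d B]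
    apply Tendsto.congr' he
    have h1 : Tendsto (fun B : ℝ => c / B) atTop (𝓝 0) :=
      tendsto_const_nhds.div_atTop tendsto_id
    have h2 : Tendsto (fun B : ℝ => (1 - c / B) / d) atTop (𝓝 ((1 - 0) / d)) :=
      (tendsto_const_nhds.sub h1).div_const d
    simpa [one_div] using h2
  -- part (c)
  have hcc : Tendsto (fun B => CEloss piv p (Lhat B)) atTop (𝓝 (entropyH piv p)) := by
    have hexp0 : Tendsto (fun B => Real.exp (-(R B))) atTop (𝓝 0) :=
      Real.tendsto_exp_atBot.comp (tendsto_neg_atBot_iff.mpr hb1)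
    have hupt : Tendsto (fun B => entropyH piv p + K * Real.exp (-(R B))) atTop
        (𝓝 (entropyH piv p)) := by
      have h5 : Tendsto (fun B => entropyH piv p + K * Real.exp (-(R B))) atTop
          (𝓝 (entropyH piv p + K * 0)) :=
        Tendsto.add (tendsto_const_nhds (x := entropyH piv p))
          (Tendsto.mul (tendsto_const_nhds (x := K)) hexp0)
      simpa using h5
    apply tendsto_of_tendsto_of_tendsto_of_le_of_le' tendsto_const_nhds hupt
    · exact Eventually.of_forall fun B => (hgt (Lhat B)).le
    · filter_upwards [eventually_gt_atTop c] with B hBc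
      have hB0 : 0 < B := lt_of_le_of_lt hc hBc
      obtain ⟨hball, hopt⟩ := hmin B hB0
      obtain ⟨hnorm, hbound⟩ := parta B hBc
      calc CEloss piv p (Lhat B) ≤ CEloss piv p (Lin + R B • Lmm) :=
            hopt _ hnorm
        _ ≤ entropyH piv p + K * Real.exp (-(R B)) := hbound
  exact ⟨parta, hb1, hb2, hcc⟩
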